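/- Let k be a power of 2, n ≥ 1, and f a non-increasing probability density on {1,…,k}. Let f*_n be the idealized tree-based estimate of f with leaf set L*. Then TV(f*_n, f) ≤ (5/2) · sqrt( |{u ∈ L* : |I_u| > 1}| / n ). -/

import Mathlib

open Finset

/-- For `k = 2^m`, the node at depth `j` and position `i` (for `i < 2^j`) of the
complete binary tree of dyadic subintervals of `{1, …, 2^m}` covers the interval
`I_{j,i} = {i · 2^{m-j} + 1, …, (i+1) · 2^{m-j}}`. -/
def nodeInterval (m j i : ℕ) : Finset ℕ :=
  Finset.Icc (i * 2 ^ (m - j) + 1) ((i + 1) * 2 ^ (m - j))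

/-- `f_{I_{j,i}} = ∑_{x ∈ I_{j,i}} f x`, the mass of `f` on the interval of node `(j, i)`. -/
noncomputable def blockSum (f : ℕ → ℝ) (m j i : ℕ) : ℝ :=
  ∑ x ∈ nodeInterval m j i, f x

/-- The idealized splitting rule: the node `(j, i)` splits iff its interval has more
than one point (i.e. `j < m`) and, with `I_v`, `I_w` the left and right halves of its
interval, `f_{I_v} - f_{I_w} > √((f_{I_v} + f_{I_w})/n)`. -/
def Splits (f : ℕ → ℝ) (n m j i : ℕ) : Prop :=
  j < m ∧
    blockSum f m (j + 1) (2 * i) - blockSum f m (j + 1) (2 * i + 1) >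
      Real.sqrt ((blockSum f m (j + 1) (2 * i) + blockSum f m (j + 1) (2 * i + 1)) / n)

/-- Membership of the node `(j, i)` in the idealized tree `T*(f)`: the root `(0, 0)`
is in the tree, and a node is in the tree iff its parent is in the tree and splits. -/
def InTree (f : ℕ → ℝ) (n m : ℕ) : ℕ → ℕ → Prop
  | 0, i => i = 0
  | j + 1, i => InTree f n m j (i / 2) ∧ Splits f n m j (i / 2)

/-- The node `(j, i)` is a leaf of the idealized tree `T*(f)`: it belongs to the tree
and does not split. -/
def IsLeaf (f : ℕ → ℝ) (n m j i : ℕ) : Prop :=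
  InTree f n m j i ∧ ¬ Splits f n m j i



lemma shift_sum (G : ℕ → ℝ) (A h : ℕ) :
    ∑ x ∈ Finset.Ioc (A + h) (A + 2*h), G x = ∑ x ∈ Finset.Ioc A (A + h), G (x + h) := by
  have : Finset.Ioc (A + h) (A + 2*h) = (Finset.Ioc A (A + h)).map (addRightEmbedding h) := by
    rw [Finset.map_add_right_Ioc]; ring_nf
  rw [this, Finset.sum_map]; rfl

lemma key_bound (f : ℕ → ℝ) (A h : ℕ)
    (hmono : ∀ x y, A + 1 ≤ x → x ≤ y → y ≤ A + 2*h → f y ≤ f x) :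
    ∑ x ∈ Finset.Ioc A (A + 2*h), |f x - (∑ y ∈ Finset.Ioc A (A + 2*h), f y) / (2*(h:ℝ))| ≤
      2 * ((∑ x ∈ Finset.Ioc A (A + h), f x) - ∑ x ∈ Finset.Ioc (A + h) (A + 2*h), f x) := by
  rcases Nat.eq_zero_or_pos h with rfl | hh
  · simp
  set S := ∑ y ∈ Finset.Ioc A (A + 2*h), f y with hS
  set a : ℝ := S / (2*(h:ℝ)) with ha
  have hcard : ((Finset.Ioc A (A + 2*h)).card : ℝ) = 2*(h:ℝ) := by
    rw [Nat.card_Ioc, Nat.add_sub_cancel_left]; push_cast; ring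
  have hsum0 : ∑ x ∈ Finset.Ioc A (A + 2*h), (f x - a) = 0 := by
    rw [Finset.sum_sub_distrib, Finset.sum_const, nsmul_eq_mul, hcard, ha]
    field_simp
    rw [hS, sub_self]
  have hVW : (∑ x ∈ Finset.Ioc A (A + h), f x) + ∑ x ∈ Finset.Ioc (A + h) (A + 2*h), f x = S := by
    rw [hS, Finset.sum_Ioc_consecutive] <;> omega
  have key : ∀ x ∈ Finset.Ioc A (A + h), f (x + h) ≤ f x := by
    intro x hx
    simp only [Finset.mem_Ioc] at hx
    exact hmono x (x + h) (by omega) (by omega) (by omega)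
  -- two expressions for the abs sum
  have habs1 : ∑ x ∈ Finset.Ioc A (A + 2*h), |f x - a|
      = 2 * ∑ x ∈ Finset.Ioc A (A + 2*h), max (f x - a) 0 := by
    have : ∀ x, |f x - a| = -(f x - a) + 2 * max (f x - a) 0 := by
      intro x; rcases le_total (f x - a) 0 with h' | h'
      · rw [abs_of_nonpos h', max_eq_right h']; ring
      · rw [abs_of_nonneg h', max_eq_left h']; ring
    rw [Finset.sum_congr rfl (fun x _ => this x), Finset.sum_add_distrib,
      Finset.sum_neg_distrib, hsum0, ← Finset.mul_sum]
    ring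
  have habs2 : ∑ x ∈ Finset.Ioc A (A + 2*h), |f x - a|
      = 2 * ∑ x ∈ Finset.Ioc A (A + 2*h), max (a - f x) 0 := by
    have : ∀ x, |f x - a| = (f x - a) + 2 * max (a - f x) 0 := by
      intro x; rcases le_total (f x - a) 0 with h' | h'
      · rw [abs_of_nonpos h', max_eq_left (by linarith)]; ring
      · rw [abs_of_nonneg h', max_eq_right (by linarith)]; ring
    rw [Finset.sum_congr rfl (fun x _ => this x), Finset.sum_add_distrib,
      hsum0, ← Finset.mul_sum]
    ring
  have hsplitmax : ∀ G : ℕ → ℝ, ∑ x ∈ Finset.Ioc A (A + 2*h), G x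
      = (∑ x ∈ Finset.Ioc A (A + h), G x) + ∑ x ∈ Finset.Ioc A (A + h), G (x + h) := by
    intro G
    rw [← shift_sum, Finset.sum_Ioc_consecutive] <;> omega
  have hdiff : (∑ x ∈ Finset.Ioc A (A + h), f x) - (∑ x ∈ Finset.Ioc (A + h) (A + 2*h), f x)
      = ∑ x ∈ Finset.Ioc A (A + h), (f x - f (x + h)) := by
    rw [shift_sum, Finset.sum_sub_distrib]
  rcases le_total (f (A + h + 1)) a with hcase | hcase
  · -- case A: right half below average
    rw [habs1, hdiff, hsplitmax (fun x => max (f x - a) 0)]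
    have h1 : ∑ x ∈ Finset.Ioc A (A + h), max (f (x + h) - a) 0 = 0 := by
      apply Finset.sum_eq_zero
      intro x hx
      simp only [Finset.mem_Ioc] at hx
      have : f (x + h) ≤ f (A + h + 1) := hmono (A + h + 1) (x + h) (by omega) (by omega) (by omega)
      exact max_eq_right (by linarith)
    rw [h1, add_zero]
    have h2 : ∑ x ∈ Finset.Ioc A (A + h), max (f x - a) 0
        ≤ ∑ x ∈ Finset.Ioc A (A + h), (f x - f (x + h)) := by
      apply Finset.sum_le_sum
      intro x hx
      simp only [Finset.mem_Ioc] at hx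
      have hfx : f (x + h) ≤ f (A + h + 1) := hmono (A + h + 1) (x + h) (by omega) (by omega) (by omega)
      have hfx2 : f (x + h) ≤ f x := hmono x (x + h) (by omega) (by omega) (by omega)
      exact max_le (by linarith) (by linarith)
    linarith
  · -- case B: left half above average
    rw [habs2, hdiff, hsplitmax (fun x => max (a - f x) 0)]
    have h1 : ∑ x ∈ Finset.Ioc A (A + h), max (a - f x) 0 = 0 := by
      apply Finset.sum_eq_zero
      intro x hx
      simp only [Finset.mem_Ioc] at hx
      have : f (A + h + 1) ≤ f x := hmono x (A + h + 1) (by omega) (by omega) (by omega)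
      exact max_eq_right (by linarith)
    rw [h1, zero_add]
    have h2 : ∑ x ∈ Finset.Ioc A (A + h), max (a - f (x + h)) 0
        ≤ ∑ x ∈ Finset.Ioc A (A + h), (f x - f (x + h)) := by
      apply Finset.sum_le_sum
      intro x hx
      simp only [Finset.mem_Ioc] at hx
      have hfx : f (A + h + 1) ≤ f x := hmono x (A + h + 1) (by omega) (by omega) (by omega)
      have hfx2 : f (x + h) ≤ f x := hmono x (x + h) (by omega) (by omega) (by omega)
      exact max_le (by linarith) (by linarith)
    linarith


lemma nodeInterval_eq_Ioc (m j i : ℕ) :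
    nodeInterval m j i = Finset.Ioc (i * 2 ^ (m - j)) ((i + 1) * 2 ^ (m - j)) :=
  by ext x; simp only [nodeInterval, Finset.mem_Icc, Finset.mem_Ioc]; omega

lemma mem_nodeInterval_iff (m j i x : ℕ) :
    x ∈ nodeInterval m j i ↔ i * 2 ^ (m - j) < x ∧ x ≤ (i + 1) * 2 ^ (m - j) := by
  rw [nodeInterval_eq_Ioc, Finset.mem_Ioc]

lemma inTree_bound {f : ℕ → ℝ} {n m : ℕ} : ∀ {j i : ℕ}, InTree f n m j i → j ≤ m ∧ i < 2 ^ j := by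
  intro j
  induction j with
  | zero => intro i hi; rw [InTree] at hi; subst hi; exact ⟨Nat.zero_le _, by norm_num⟩
  | succ j ih =>
    intro i hi
    rw [InTree] at hi
    obtain ⟨h1, h2⟩ := hi
    obtain ⟨hj, hi2⟩ := ih h1
    refine ⟨h2.1, ?_⟩
    have h2i : i < 2 * (i / 2) + 2 := by omega
    have hp : 2 ^ (j + 1) = 2 ^ j * 2 := pow_succ 2 j
    omega

/-- index of the depth-`j` node containing `x` -/
def idx (m j x : ℕ) : ℕ := (x - 1) / 2 ^ (m - j)

lemma mem_nodeInterval_idx {m j x : ℕ} (hx1 : 1 ≤ x) (hx2 : x ≤ 2 ^ m) :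
    x ∈ nodeInterval m j (idx m j x) := by
  rw [mem_nodeInterval_iff, idx]
  have hpos : 0 < 2 ^ (m - j) := Nat.pow_pos (by norm_num)
  constructor
  · have := Nat.div_mul_le_self (x - 1) (2 ^ (m - j))
    omega
  · have := (Nat.div_lt_iff_lt_mul hpos).mp
      (show (x - 1) / 2 ^ (m - j) < (x - 1) / 2 ^ (m - j) + 1 by omega)
    omega

lemma idx_eq_of_mem {m j i x : ℕ} (hx : x ∈ nodeInterval m j i) : i = idx m j x := by
  rw [mem_nodeInterval_iff] at hx
  rw [idx]
  have hpos : 0 < 2 ^ (m - j) := Nat.pow_pos (by norm_num)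
  symm
  apply Nat.div_eq_of_lt_le <;> omega

lemma idx_zero {m x : ℕ} (hx2 : x ≤ 2 ^ m) : idx m 0 x = 0 := by
  rw [idx]
  apply Nat.div_eq_of_lt
  simp only [Nat.sub_zero]
  have : 1 ≤ 2 ^ m := Nat.one_le_two_pow
  omega

lemma idx_succ {m j x : ℕ} (hj : j < m) : idx m (j + 1) x / 2 = idx m j x := by
  rw [idx, idx, Nat.div_div_eq_div_mul]
  congr 1
  have h1 : m - j = (m - (j + 1)) + 1 := by omega
  rw [h1, pow_succ]

lemma inTree_of_splits_below {f : ℕ → ℝ} {n m x : ℕ} (hx1 : 1 ≤ x) (hx2 : x ≤ 2 ^ m) :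
    ∀ j, j ≤ m → (∀ j' < j, Splits f n m j' (idx m j' x)) → InTree f n m j (idx m j x) := by
  intro j
  induction j with
  | zero => intro _ _; rw [InTree]; exact idx_zero hx2
  | succ j ih =>
    intro hj hsp
    rw [InTree, idx_succ (by omega)]
    exact ⟨ih (by omega) (fun j' hj' => hsp j' (by omega)), hsp j (by omega)⟩

lemma exists_leaf {f : ℕ → ℝ} {n m x : ℕ} (hx1 : 1 ≤ x) (hx2 : x ≤ 2 ^ m) :
    ∃ j, IsLeaf f n m j (idx m j x) := by
  classical
  have hex : ∃ j, ¬ Splits f n m j (idx m j x) := ⟨m, fun h => lt_irrefl m h.1⟩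
  let j0 := Nat.find hex
  have hj0 : ¬ Splits f n m j0 (idx m j0 x) := Nat.find_spec hex
  have hj0m : j0 ≤ m := Nat.find_le (fun h => lt_irrefl m h.1)
  refine ⟨j0, inTree_of_splits_below hx1 hx2 j0 hj0m (fun j' hj' => ?_), hj0⟩
  by_contra hns
  exact Nat.find_min hex hj' hns

lemma splits_of_inTree {f : ℕ → ℝ} {n m x : ℕ} (hx1 : 1 ≤ x) (hx2 : x ≤ 2 ^ m) :
    ∀ j i, InTree f n m j i → x ∈ nodeInterval m j i →
      ∀ j' < j, Splits f n m j' (idx m j' x) := by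
  intro j
  induction j with
  | zero => intro i _ _ j' hj'; omega
  | succ j ih =>
    intro i hT hx j' hj'
    have hjm : j + 1 ≤ m := (inTree_bound hT).1
    rw [InTree] at hT
    obtain ⟨hT1, hT2⟩ := hT
    have hi : i = idx m (j+1) x := idx_eq_of_mem hx
    have hhalf : i / 2 = idx m j x := by rw [hi, idx_succ (by omega)]
    rcases Nat.lt_succ_iff_lt_or_eq.mp hj' with h | h
    · have hxmem : x ∈ nodeInterval m j (i / 2) := by
        rw [hhalf]; exact mem_nodeInterval_idx hx1 hx2
      exact ih (i / 2) hT1 hxmem j' h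
    · subst h; rwa [← hhalf]

lemma leaf_unique {f : ℕ → ℝ} {n m x : ℕ} (hx1 : 1 ≤ x) (hx2 : x ≤ 2 ^ m)
    {j i j' i' : ℕ} (h1 : IsLeaf f n m j i) (h2 : IsLeaf f n m j' i')
    (hm1 : x ∈ nodeInterval m j i) (hm2 : x ∈ nodeInterval m j' i') :
    j = j' ∧ i = i' := by
  have hi : i = idx m j x := idx_eq_of_mem hm1
  have hi' : i' = idx m j' x := idx_eq_of_mem hm2
  have hjj : j = j' := by
    by_contra hne
    rcases Nat.lt_or_ge j j' with h | h
    · exact h1.2 (by rw [hi]; exact splits_of_inTree hx1 hx2 j' i' h2.1 hm2 j h)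
    · have h' : j' < j := by omega
      exact h2.2 (by rw [hi']; exact splits_of_inTree hx1 hx2 j i h1.1 hm1 j' h')
  subst hjj
  exact ⟨rfl, by rw [hi, hi']⟩

lemma nodeInterval_subset {m j i : ℕ} (hj : j ≤ m) (hi : i < 2 ^ j) :
    nodeInterval m j i ⊆ Finset.Icc 1 (2 ^ m) := by
  intro x hx
  rw [mem_nodeInterval_iff] at hx
  rw [Finset.mem_Icc]
  have hle : (i + 1) * 2 ^ (m - j) ≤ 2 ^ m := by
    calc (i + 1) * 2 ^ (m - j) ≤ 2 ^ j * 2 ^ (m - j) := by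
          apply Nat.mul_le_mul_right; omega
      _ = 2 ^ m := by rw [← pow_add]; congr 1; omega
  omega


/-- **Proposition 3.1**: for `k = 2^m` a power of two, `n ≥ 1`, and `f` a
non-increasing probability density on `{1, …, k}`, the idealized tree-based estimate
`f*_n` (the function `g` equal to the average `f̄_{I_u} = f_{I_u}/|I_u|` of `f` on each
leaf interval `I_u`, `u ∈ L*`) satisfies
`TV(f*_n, f) ≤ (5/2) √(|{u ∈ L* : |I_u| > 1}| / n)`. -/
theorem stmt5 (m n : ℕ) (hn : 1 ≤ n) (f : ℕ → ℝ)
    (hf0 : ∀ x, 0 ≤ f x)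
    (hf1 : ∑ x ∈ Finset.Icc 1 (2 ^ m), f x = 1)
    (hmono : ∀ x, 1 ≤ x → x + 1 ≤ 2 ^ m → f (x + 1) ≤ f x)
    (g : ℕ → ℝ)
    (hg : ∀ j i, IsLeaf f n m j i → ∀ x ∈ nodeInterval m j i,
      g x = blockSum f m j i / (2 : ℝ) ^ (m - j))
    (L : Finset (ℕ × ℕ))
    (hL : ∀ p : ℕ × ℕ, p ∈ L ↔ IsLeaf f n m p.1 p.2) :
    (∑ x ∈ Finset.Icc 1 (2 ^ m), |g x - f x|) / 2 ≤
      (5 / 2) * Real.sqrt (((L.filter fun p => p.1 < m).card : ℝ) / n) := by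
  classical
  -- global monotonicity
  have hmono2 : ∀ x, 1 ≤ x → ∀ y, x ≤ y → y ≤ 2 ^ m → f y ≤ f x := by
    intro x hx y hxy
    induction y, hxy using Nat.le_induction with
    | base => intro _; exact le_refl _
    | succ y hy' ih =>
      intro hy1
      exact le_trans (hmono y (by omega) hy1) (ih (by omega))
  -- the leaf intervals partition Icc 1 (2^m)
  have hpart : Finset.Icc 1 (2 ^ m) = L.biUnion (fun p => nodeInterval m p.1 p.2) := by
    ext x
    simp only [Finset.mem_biUnion, Finset.mem_Icc]
    constructor
    · rintro ⟨hx1, hx2⟩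
      obtain ⟨j, hleaf⟩ := exists_leaf (f := f) (n := n) hx1 hx2
      exact ⟨(j, idx m j x), (hL _).2 hleaf, mem_nodeInterval_idx hx1 hx2⟩
    · rintro ⟨p, hp, hx⟩
      have hleaf := (hL p).1 hp
      obtain ⟨hjm, hi⟩ := inTree_bound hleaf.1
      have := nodeInterval_subset hjm hi hx
      rwa [Finset.mem_Icc] at this
  have hdisj : (↑L : Set (ℕ × ℕ)).PairwiseDisjoint (fun p => nodeInterval m p.1 p.2) := by
    intro p hp q hq hne
    simp only [Finset.mem_coe] at hp hq
    have hlp := (hL p).1 hp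
    have hlq := (hL q).1 hq
    rw [Function.onFun, Finset.disjoint_left]
    intro x hxp hxq
    obtain ⟨hjm, hi⟩ := inTree_bound hlp.1
    have hxI := nodeInterval_subset hjm hi hxp
    rw [Finset.mem_Icc] at hxI
    obtain ⟨h1, h2⟩ := leaf_unique hxI.1 hxI.2 hlp hlq hxp hxq
    exact hne (Prod.ext h1 h2)
  have hsum : ∀ G : ℕ → ℝ, ∑ x ∈ Finset.Icc 1 (2 ^ m), G x
      = ∑ p ∈ L, ∑ x ∈ nodeInterval m p.1 p.2, G x := by
    intro G; rw [hpart, Finset.sum_biUnion hdisj]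
  have hb0 : ∀ p : ℕ × ℕ, 0 ≤ blockSum f m p.1 p.2 := fun p =>
    Finset.sum_nonneg fun x _ => hf0 x
  have htot : ∑ p ∈ L, blockSum f m p.1 p.2 = 1 := by
    rw [← hf1, hsum f]; rfl
  have hnR : (0:ℝ) < n := by positivity
  -- per-leaf bound
  have hleafbound : ∀ p ∈ L, ∑ x ∈ nodeInterval m p.1 p.2, |g x - f x|
      ≤ if p.1 < m then 2 * Real.sqrt (blockSum f m p.1 p.2 / n) else 0 := by
    rintro ⟨j, i⟩ hp
    have hleaf := (hL _).1 hp
    obtain ⟨hjm, hi⟩ := inTree_bound hleaf.1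
    simp only at hjm hi ⊢
    by_cases hjlt : j < m
    · rw [if_pos hjlt]
      set s := m - j - 1 with hs
      set A := i * 2 ^ (m - j) with hA
      set h := 2 ^ s with hh
      have h2h : 2 * h = 2 ^ (m - j) := by
        rw [hh, ← pow_succ']; congr 1; omega
      have hms : m - (j + 1) = s := by omega
      have hIoc : nodeInterval m j i = Finset.Ioc A (A + 2 * h) := by
        rw [nodeInterval_eq_Ioc, hA, h2h]; congr 1; ring
      have hV : nodeInterval m (j + 1) (2 * i) = Finset.Ioc A (A + h) := by
        rw [nodeInterval_eq_Ioc, hms, hA, ← h2h]; congr 1 <;> ring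
      have hW : nodeInterval m (j + 1) (2 * i + 1) = Finset.Ioc (A + h) (A + 2 * h) := by
        rw [nodeInterval_eq_Ioc, hms, hA, ← h2h]; congr 1 <;> ring
      have hbv : blockSum f m (j + 1) (2 * i) = ∑ x ∈ Finset.Ioc A (A + h), f x := by
        rw [blockSum, hV]
      have hbw : blockSum f m (j + 1) (2 * i + 1) = ∑ x ∈ Finset.Ioc (A + h) (A + 2 * h), f x := by
        rw [blockSum, hW]
      have hbsum : blockSum f m j i = (∑ x ∈ Finset.Ioc A (A + h), f x)
          + ∑ x ∈ Finset.Ioc (A + h) (A + 2 * h), f x := by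
        rw [blockSum, hIoc, Finset.sum_Ioc_consecutive] <;> omega
      -- not splitting
      have hns : (∑ x ∈ Finset.Ioc A (A + h), f x) - ∑ x ∈ Finset.Ioc (A + h) (A + 2 * h), f x
          ≤ Real.sqrt (blockSum f m j i / n) := by
        have := hleaf.2
        rw [Splits, not_and] at this
        have h2 := this hjlt
        push_neg at h2
        rw [hbv, hbw] at h2
        rw [hbsum]
        exact h2
      -- interval bounds
      have hA2h : A + 2 * h ≤ 2 ^ m := by
        have : (i + 1) * 2 ^ (m - j) ≤ 2 ^ j * 2 ^ (m - j) :=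
          Nat.mul_le_mul_right _ (by omega)
        have hpow : 2 ^ j * 2 ^ (m - j) = 2 ^ m := by rw [← pow_add]; congr 1; omega
        have hAe : A + 2 * h = (i + 1) * 2 ^ (m - j) := by rw [h2h, hA]; ring
        omega
      -- rewrite g on the interval
      have hcast : (2 : ℝ) * (h : ℝ) = (2 : ℝ) ^ (m - j) := by
        have := congrArg (fun k : ℕ => (k : ℝ)) h2h
        push_cast at this
        simpa using this
      have hgx : ∀ x ∈ Finset.Ioc A (A + 2 * h),
          g x = (∑ y ∈ Finset.Ioc A (A + 2 * h), f y) / (2 * (h : ℝ)) := by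
        intro x hx
        rw [← hIoc] at hx
        rw [hg j i hleaf x hx, blockSum, hIoc, ← hcast]
      have hkey := key_bound f A h (fun x y hx hxy hy =>
        hmono2 x (by omega) y hxy (by omega))
      calc ∑ x ∈ nodeInterval m j i, |g x - f x|
          = ∑ x ∈ Finset.Ioc A (A + 2 * h),
              |f x - (∑ y ∈ Finset.Ioc A (A + 2 * h), f y) / (2 * (h : ℝ))| := by
            rw [hIoc]
            exact Finset.sum_congr rfl fun x hx => by rw [hgx x hx, abs_sub_comm]
        _ ≤ 2 * ((∑ x ∈ Finset.Ioc A (A + h), f x)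
              - ∑ x ∈ Finset.Ioc (A + h) (A + 2 * h), f x) := hkey
        _ ≤ 2 * Real.sqrt (blockSum f m j i / n) := by linarith
    · -- j = m : singleton leaf, g = f
      rw [if_neg hjlt]
      have hjm' : j = m := by omega
      subst hjm'
      have hne : nodeInterval j j i = {i + 1} := by
        rw [nodeInterval]; simp
      rw [hne, Finset.sum_singleton]
      have hgi : g (i + 1) = f (i + 1) := by
        rw [hg j i hleaf (i + 1) (by rw [hne]; exact Finset.mem_singleton_self _),
          blockSum, hne, Finset.sum_singleton]
        simp
      rw [hgi]
      simp
  -- sum up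
  set F := L.filter (fun p => p.1 < m) with hF
  have hstep1 : ∑ x ∈ Finset.Icc 1 (2 ^ m), |g x - f x|
      ≤ ∑ p ∈ F, 2 * Real.sqrt (blockSum f m p.1 p.2 / n) := by
    rw [hsum (fun x => |g x - f x|), hF, Finset.sum_filter]
    exact Finset.sum_le_sum hleafbound
  have hFsub : ∑ p ∈ F, blockSum f m p.1 p.2 ≤ 1 := by
    rw [← htot]
    exact Finset.sum_le_sum_of_subset_of_nonneg (Finset.filter_subset _ _)
      (fun p _ _ => hb0 p)
  -- Cauchy-Schwarz
  have hCS : (∑ p ∈ F, Real.sqrt (blockSum f m p.1 p.2)) ^ 2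
      ≤ (F.card : ℝ) * ∑ p ∈ F, blockSum f m p.1 p.2 := by
    have := Finset.sum_mul_sq_le_sq_mul_sq F (fun _ => 1)
      (fun p => Real.sqrt (blockSum f m p.1 p.2))
    simpa [Real.sq_sqrt (hb0 _)] using this
  have hsq : (∑ p ∈ F, Real.sqrt (blockSum f m p.1 p.2)) ^ 2 ≤ (F.card : ℝ) := by
    calc _ ≤ (F.card : ℝ) * ∑ p ∈ F, blockSum f m p.1 p.2 := hCS
      _ ≤ (F.card : ℝ) * 1 := by
          apply mul_le_mul_of_nonneg_left hFsub (by positivity)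
      _ = (F.card : ℝ) := mul_one _
  have hsum_nonneg : 0 ≤ ∑ p ∈ F, Real.sqrt (blockSum f m p.1 p.2) :=
    Finset.sum_nonneg fun p _ => Real.sqrt_nonneg _
  have hsqrtle : ∑ p ∈ F, Real.sqrt (blockSum f m p.1 p.2) ≤ Real.sqrt (F.card : ℝ) := by
    have h1 := Real.sqrt_le_sqrt hsq
    rwa [Real.sqrt_sq hsum_nonneg] at h1
  have hdivsqrt : ∀ p : ℕ × ℕ, Real.sqrt (blockSum f m p.1 p.2 / n)
      = Real.sqrt (blockSum f m p.1 p.2) / Real.sqrt n := fun p =>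
    Real.sqrt_div (hb0 p) n
  have hsn : (0:ℝ) < Real.sqrt n := Real.sqrt_pos.2 hnR
  have hstep2 : ∑ p ∈ F, 2 * Real.sqrt (blockSum f m p.1 p.2 / n)
      ≤ 2 * Real.sqrt ((F.card : ℝ) / n) := by
    have heq : ∑ p ∈ F, 2 * Real.sqrt (blockSum f m p.1 p.2 / n)
        = 2 * (∑ p ∈ F, Real.sqrt (blockSum f m p.1 p.2)) / Real.sqrt n := by
      have h1 : ∀ p ∈ F, 2 * Real.sqrt (blockSum f m p.1 p.2 / n)
          = 2 * (Real.sqrt (blockSum f m p.1 p.2) / Real.sqrt n) :=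
        fun p _ => by rw [hdivsqrt p]
      rw [Finset.sum_congr rfl h1, ← Finset.mul_sum, ← Finset.sum_div]
      ring
    rw [heq, Real.sqrt_div (by positivity) n, div_le_iff₀ hsn]
    have hre : 2 * (Real.sqrt (F.card : ℝ) / Real.sqrt n) * Real.sqrt n
        = 2 * Real.sqrt (F.card : ℝ) := by field_simp
    rw [hre]
    linarith

  have hfinal : ∑ x ∈ Finset.Icc 1 (2 ^ m), |g x - f x| ≤ 2 * Real.sqrt ((F.card : ℝ) / n) :=
    le_trans hstep1 hstep2
  have hrhs : (0:ℝ) ≤ Real.sqrt ((F.card : ℝ) / n) := Real.sqrt_nonneg _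
  linarith
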